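/- Let t > 0, −π/3 < θ < π/3, (θ, t) ≠ (0, 1), and let p, q, r ≥ 0 be real numbers. Set α = (p+q+r)|t − e^{iθ}|²/(3(2cosθ − 1)). If D[α,p,q,r,t,θ] = 0, then p = q = r. -/
import Mathlib


open Complex

noncomputable def Dpoly (α p q r t θ : ℝ) : ℝ :=
  (p * q * r) * t ^ 6 + α * (p * q + q * r + r * p) * t ^ 4
    - 2 * (α * (p * q + q * r + r * p) + Real.cos (3 * θ) * (p * q * r)) * t ^ 3
    + α * (1 - 2 * Real.cos (3 * θ)) * (p * q + q * r + r * p) * t ^ 2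
    - 2 * α * (α * (p + q + r) + α * Real.cos (3 * θ) * (p + q + r)
        + (p * q + q * r + r * p)) * t
    + (p * q * r) + α * (p * q + q * r + r * p) - 2 * α ^ 3 * (1 + Real.cos (3 * θ))

set_option maxHeartbeats 4000000 in
/-- If `D[α,p,q,r,t,θ] = 0` with `α = (p+q+r)|t-e^{iθ}|²/(3(2cosθ-1))`, then `p = q = r`. -/
theorem Dpoly_zero_imp_eq (p q r t θ : ℝ) (ht : 0 < t)
    (hθl : -(Real.pi / 3) < θ) (hθr : θ < Real.pi / 3) (hne : ¬(θ = 0 ∧ t = 1))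
    (hp : 0 ≤ p) (hq : 0 ≤ q) (hr : 0 ≤ r)
    (hD : Dpoly ((p + q + r) * Complex.normSq ((t : ℂ) - exp (θ * I)) /
        (3 * (2 * Real.cos θ - 1))) p q r t θ = 0) :
    p = q ∧ q = r := by
  have hπ := Real.pi_pos
  set c := Real.cos θ with hc
  clear_value c
  have hc3 : Real.cos (3 * θ) = 4 * c ^ 3 - 3 * c := by
    rw [hc]; exact Real.cos_three_mul θ
  have hs : Real.sin θ ^ 2 + c ^ 2 = 1 := by rw [hc]; exact Real.sin_sq_add_cos_sq θ
  have hchalf : 1 / 2 < c := by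
    have h1 : Real.cos (Real.pi / 3) < Real.cos |θ| :=
      Real.cos_lt_cos_of_nonneg_of_le_pi (abs_nonneg θ) (by linarith)
        (abs_lt.mpr ⟨hθl, hθr⟩)
    rw [Real.cos_abs, Real.cos_pi_div_three] at h1
    rw [hc]; exact h1
  have hcle : c ≤ 1 := by rw [hc]; exact Real.cos_le_one θ
  have hdpos : 0 < 2 * c - 1 := by linarith
  have hupos : 0 < t ^ 2 - 2 * t * c + 1 := by
    rcases eq_or_ne (Real.sin θ) 0 with h0 | h0
    · have hθ0 : θ = 0 :=
        (Real.sin_eq_zero_iff_of_lt_of_lt (by linarith) (by linarith)).mp h0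
      have ht1 : t ≠ 1 := fun h => hne ⟨hθ0, h⟩
      have hc1 : c = 1 := by rw [hc, hθ0, Real.cos_zero]
      have h5 : 0 < (t - 1) ^ 2 := by
        have : t - 1 ≠ 0 := sub_ne_zero.mpr ht1
        positivity
      rw [hc1]; nlinarith [h5]
    · have h6 : 0 < Real.sin θ ^ 2 := by positivity
      nlinarith [sq_nonneg (t - c), h6, hs]
  have hC1 : 0 < 2*(c+1)*(2*c-1)^2*(t^2-2*t*c+1)^2*(3*(2*c-1)*t+(t^2-2*t*c+1)) := by
    have h2 : 0 < (2*c-1)^2 := by positivity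
    have h3 : 0 < (t^2-2*t*c+1)^2 := by positivity
    have h4 : 0 < 3*(2*c-1)*t+(t^2-2*t*c+1) := by nlinarith [mul_pos hdpos ht]
    have h1 : (0:ℝ) < 2*(c+1) := by linarith
    exact mul_pos (mul_pos (mul_pos h1 h2) h3) h4
  have hf : 0 ≤ (p+q+r)*((p+q+r)^2-3*(p*q+q*r+r*p)) :=
    mul_nonneg (by linarith)
      (by nlinarith [sq_nonneg (p-q), sq_nonneg (q-r), sq_nonneg (r-p)])
  have hg : 0 ≤ (p+q+r)*(p*q+q*r+r*p)-9*(p*q*r) := by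
    nlinarith [mul_nonneg hp (sq_nonneg (q-r)), mul_nonneg hq (sq_nonneg (r-p)),
      mul_nonneg hr (sq_nonneg (p-q))]
  have hH : 0 ≤ (t^2+c*t+1)^2-3*(1-c^2)*t^2 := by
    nlinarith [mul_nonneg ht.le (sq_nonneg (t-1)), sq_nonneg ((t-1)^2),
      sq_nonneg ((2*c+1)*t), hchalf]
  have hC2 : 0 ≤ 3*(2*c-1)^3*(t^2-2*t*c+1)*((t^2+c*t+1)^2-3*(1-c^2)*t^2) :=
    mul_nonneg (mul_nonneg (by positivity) hupos.le) hH
  have hT2 : 0 ≤ 3*(2*c-1)^3*(t^2-2*t*c+1)*((t^2+c*t+1)^2-3*(1-c^2)*t^2)*((p+q+r)*(p*q+q*r+r*p)-9*(p*q*r)) :=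
    mul_nonneg hC2 hg
  have hT1 : 0 ≤ 2*(c+1)*(2*c-1)^2*(t^2-2*t*c+1)^2*(3*(2*c-1)*t+(t^2-2*t*c+1))*((p+q+r)*((p+q+r)^2-3*(p*q+q*r+r*p))) :=
    mul_nonneg hC1.le hf
  have hnorm : Complex.normSq ((t : ℂ) - exp (θ * I)) = t ^ 2 - 2 * t * c + 1 := by
    rw [Complex.normSq_apply, Complex.sub_re, Complex.sub_im,
      Complex.exp_ofReal_mul_I_re, Complex.exp_ofReal_mul_I_im,
      Complex.ofReal_re, Complex.ofReal_im]
    rw [hc] at hs ⊢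
    linear_combination hs
  unfold Dpoly at hD
  rw [hnorm, hc3] at hD
  set α := (p + q + r) * (t ^ 2 - 2 * t * c + 1) / (3 * (2 * c - 1)) with hα0
  clear_value α
  have hα : α * (3 * (2 * c - 1)) = (p + q + r) * (t ^ 2 - 2 * t * c + 1) := by
    rw [hα0]; exact div_mul_cancel₀ _ (by positivity)
  have key : 2*(c+1)*(2*c-1)^2*(t^2-2*t*c+1)^2*(3*(2*c-1)*t+(t^2-2*t*c+1))*((p+q+r)*((p+q+r)^2-3*(p*q+q*r+r*p))) + 3*(2*c-1)^3*(t^2-2*t*c+1)*((t^2+c*t+1)^2-3*(1-c^2)*t^2)*((p+q+r)*(p*q+q*r+r*p)-9*(p*q*r)) = 0 := by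
    linear_combination (-(27*(2*c-1)^3)) * hD + (-18*α^2 + 126*c*α^2 - 288*c^2*α^2 + 144*c^3*α^2 + 288*c^4*α^2 - 288*c^5*α^2 + 6*r*α - 30*r*c*α + 36*r*c^2*α + 24*r*c^3*α - 48*r*c^4*α - 18*r*t*α + 114*r*t*c*α - 228*r*t*c^2*α + 72*r*t*c^3*α + 240*r*t*c^4*α - 192*r*t*c^5*α + 6*r*t^2*α - 30*r*t^2*c*α + 36*r*t^2*c^2*α + 24*r*t^2*c^3*α - 48*r*t^2*c^4*α - 2*r^2 + 6*r^2*c - 8*r^2*c^3 + 6*r^2*t - 22*r^2*t*c + 12*r^2*t*c^2 + 24*r^2*t*c^3 - 16*r^2*t*c^4 - 4*r^2*t^2 + 52*r^2*t^2*c^2 - 64*r^2*t^2*c^3 - 48*r^2*t^2*c^4 + 64*r^2*t^2*c^5 + 6*r^2*t^3 - 22*r^2*t^3*c + 12*r^2*t^3*c^2 + 24*r^2*t^3*c^3 - 16*r^2*t^3*c^4 - 2*r^2*t^4 + 6*r^2*t^4*c - 8*r^2*t^4*c^3 + 6*q*α - 30*q*c*α + 36*q*c^2*α + 24*q*c^3*α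 - 48*q*c^4*α - 18*q*t*α + 114*q*t*c*α - 228*q*t*c^2*α + 72*q*t*c^3*α + 240*q*t*c^4*α - 192*q*t*c^5*α + 6*q*t^2*α - 30*q*t^2*c*α + 36*q*t^2*c^2*α + 24*q*t^2*c^3*α - 48*q*t^2*c^4*α + 5*q*r - 24*q*r*c + 36*q*r*c^2 - 16*q*r*c^3 - 6*q*r*t + 28*q*r*t*c - 48*q*r*t*c^2 + 48*q*r*t*c^3 - 32*q*r*t*c^4 + 1*q*r*t^2 + 18*q*r*t^2*c - 76*q*r*t^2*c^2 + 16*q*r*t^2*c^3 + 192*q*r*t^2*c^4 - 160*q*r*t^2*c^5 - 6*q*r*t^3 + 28*q*r*t^3*c - 48*q*r*t^3*c^2 + 48*q*r*t^3*c^3 - 32*q*r*t^3*c^4 + 5*q*r*t^4 - 24*q*r*t^4*c + 36*q*r*t^4*c^2 - 16*q*r*t^4*c^3 - 2*q^2 + 6*q^2*c - 8*q^2*c^3 + 6*q^2*t - 22*q^2*t*c + 12*q^2*t*c^2 + 24*q^2*t*c^3 - 16*q^2*t*c^4 - 4*q^2*t^2 + 52*q^2*t^2*c^2 - 64*q^2*t^2*c^3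 - 48*q^2*t^2*c^4 + 64*q^2*t^2*c^5 + 6*q^2*t^3 - 22*q^2*t^3*c + 12*q^2*t^3*c^2 + 24*q^2*t^3*c^3 - 16*q^2*t^3*c^4 - 2*q^2*t^4 + 6*q^2*t^4*c - 8*q^2*t^4*c^3 + 6*p*α - 30*p*c*α + 36*p*c^2*α + 24*p*c^3*α - 48*p*c^4*α - 18*p*t*α + 114*p*t*c*α - 228*p*t*c^2*α + 72*p*t*c^3*α + 240*p*t*c^4*α - 192*p*t*c^5*α + 6*p*t^2*α - 30*p*t^2*c*α + 36*p*t^2*c^2*α + 24*p*t^2*c^3*α - 48*p*t^2*c^4*α + 5*p*r - 24*p*r*c + 36*p*r*c^2 - 16*p*r*c^3 - 6*p*r*t + 28*p*r*t*c - 48*p*r*t*c^2 + 48*p*r*t*c^3 - 32*p*r*t*c^4 + 1*p*r*t^2 + 18*p*r*t^2*c - 76*p*r*t^2*c^2 + 16*p*r*t^2*c^3 + 192*p*r*t^2*c^4 - 160*p*r*t^2*c^5 - 6*p*r*t^3 + 28*p*r*t^3*c - 48*p*r*t^3*c^2 + 48*p*r*t^3*c^3 - 32*p*r*t^3*c^4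 + 5*p*r*t^4 - 24*p*r*t^4*c + 36*p*r*t^4*c^2 - 16*p*r*t^4*c^3 + 5*p*q - 24*p*q*c + 36*p*q*c^2 - 16*p*q*c^3 - 6*p*q*t + 28*p*q*t*c - 48*p*q*t*c^2 + 48*p*q*t*c^3 - 32*p*q*t*c^4 + 1*p*q*t^2 + 18*p*q*t^2*c - 76*p*q*t^2*c^2 + 16*p*q*t^2*c^3 + 192*p*q*t^2*c^4 - 160*p*q*t^2*c^5 - 6*p*q*t^3 + 28*p*q*t^3*c - 48*p*q*t^3*c^2 + 48*p*q*t^3*c^3 - 32*p*q*t^3*c^4 + 5*p*q*t^4 - 24*p*q*t^4*c + 36*p*q*t^4*c^2 - 16*p*q*t^4*c^3 - 2*p^2 + 6*p^2*c - 8*p^2*c^3 + 6*p^2*t - 22*p^2*t*c + 12*p^2*t*c^2 + 24*p^2*t*c^3 - 16*p^2*t*c^4 - 4*p^2*t^2 + 52*p^2*t^2*c^2 - 64*p^2*t^2*c^3 - 48*p^2*t^2*c^4 + 64*p^2*t^2*c^5 + 6*p^2*t^3 - 22*p^2*t^3*c + 12*p^2*t^3*c^2 + 24*p^2*t^3*c^3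 - 16*p^2*t^3*c^4 - 2*p^2*t^4 + 6*p^2*t^4*c - 8*p^2*t^4*c^3) * hα
  have hT1z : 2*(c+1)*(2*c-1)^2*(t^2-2*t*c+1)^2*(3*(2*c-1)*t+(t^2-2*t*c+1))*((p+q+r)*((p+q+r)^2-3*(p*q+q*r+r*p))) = 0 := by
    linarith [key, hT1, hT2]
  have hF : (p+q+r)*((p+q+r)^2-3*(p*q+q*r+r*p)) = 0 := by
    rcases mul_eq_zero.mp hT1z with h | h
    · exact absurd h (ne_of_gt hC1)
    · exact h
  rcases mul_eq_zero.mp hF with hS1 | hf0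
  · constructor <;> linarith
  · have h2 : (p-q)^2 + (q-r)^2 + (r-p)^2 = 0 := by linear_combination 2*hf0
    have hpq : (p-q)^2 = 0 :=
      le_antisymm (by linarith [sq_nonneg (q-r), sq_nonneg (r-p)]) (sq_nonneg _)
    have hqr : (q-r)^2 = 0 :=
      le_antisymm (by linarith [sq_nonneg (p-q), sq_nonneg (r-p)]) (sq_nonneg _)
    constructor
    · have := pow_eq_zero_iff (n := 2) (by norm_num) |>.mp hpq; linarith
    · have := pow_eq_zero_iff (n := 2) (by norm_num) |>.mp hqr; linarith
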